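/- arXiv:1505.04032 — 3 statements merged into one kernel-verified Lean document; each statement's English description precedes it below -/
import Mathlib

section
/- If a coherence measure C satisfies monotonicity under selective incoherent operations on pure states (R(|ψ⟩) ≥ Σ_n p_n R(ψ_n) for Kraus operators of an incoherent operation), and R_I is its convex-roof extension, then R_I satisfies the same monotonicity on mixed states: R_I(ρ) ≥ Σ_n p_n R_I(ρ_n), where ρ_n = K_n ρ K_n†/p_n and p_n = Tr[K_n ρ K_n†]. -/
open Matrix

/-- Intrinsic randomness of a pure state `ψ` (Shannon entropy, in bits, of the
computational-basis outcome distribution `{|ψ i|²}`). -/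
noncomputable def pureR {d : ℕ} (ψ : Fin d → ℂ) : ℝ :=
  -∑ i, ‖ψ i‖ ^ 2 * Real.logb 2 (‖ψ i‖ ^ 2)

/-- `q, ψ` is a pure-state decomposition of `ρ`: nonnegative weights summing to 1,
unit vectors, and `ρ = Σ_e q_e |ψ_e⟩⟨ψ_e|`. -/
def IsDecomp {d : ℕ} (ρ : Matrix (Fin d) (Fin d) ℂ) {m : ℕ}
    (q : Fin m → ℝ) (ψ : Fin m → Fin d → ℂ) : Prop :=
  (∀ e, 0 ≤ q e) ∧ (∑ e, q e = 1) ∧ (∀ e, ∑ i, ‖ψ e i‖ ^ 2 = 1) ∧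
    ρ = ∑ e, (q e : ℂ) • Matrix.vecMulVec (ψ e) (fun i => star (ψ e i))

/-- Convex-roof intrinsic randomness: infimum of the average pure-state randomness
over all pure-state decompositions of `ρ`. -/
noncomputable def RI {d : ℕ} (ρ : Matrix (Fin d) (Fin d) ℂ) : ℝ :=
  sInf { r | ∃ (m : ℕ) (q : Fin m → ℝ) (ψ : Fin m → Fin d → ℂ),
    IsDecomp ρ q ψ ∧ r = ∑ e, q e * pureR (ψ e) }

/-- The rank-one projector `|ψ⟩⟨ψ|` as a matrix. -/
noncomputable def pureProj {d : ℕ} (ψ : Fin d → ℂ) : Matrix (Fin d) (Fin d) ℂ :=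
  Matrix.vecMulVec ψ (fun i => star (ψ i))

lemma pureR_nonneg {d : ℕ} {ψ : Fin d → ℂ} (h : ∑ i, ‖ψ i‖ ^ 2 = 1) :
    0 ≤ pureR ψ := by
  rw [pureR, neg_nonneg]
  apply Finset.sum_nonpos
  intro i _
  apply mul_nonpos_of_nonneg_of_nonpos (by positivity)
  apply Real.logb_nonpos one_lt_two (by positivity)
  rw [← h]
  exact Finset.single_le_sum (f := fun j => ‖ψ j‖ ^ 2)
    (fun j _ => by positivity) (Finset.mem_univ i)

lemma proj_conj {d : ℕ} (K : Matrix (Fin d) (Fin d) ℂ) (ψ : Fin d → ℂ) :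
    K * pureProj ψ * K.conjTranspose = pureProj (K.mulVec ψ) := by
  ext i j
  simp only [pureProj, Matrix.mul_apply, vecMulVec_apply, conjTranspose_apply, mulVec,
    dotProduct, Finset.sum_mul, Finset.mul_sum, star_sum, star_mul', Finset.mul_sum]
  exact Finset.sum_congr rfl fun a _ => Finset.sum_congr rfl fun b _ => by ring

lemma star_mul_self' (z : ℂ) : z * star z = ((‖z‖ ^ 2 : ℝ) : ℂ) := by
  rw [show (star z) = (starRingEnd ℂ) z from rfl, Complex.mul_conj, Complex.normSq_eq_norm_sq]

lemma trace_proj {d : ℕ} (φ : Fin d → ℂ) :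
    (pureProj φ).trace = ((∑ i, ‖φ i‖ ^ 2 : ℝ) : ℂ) := by
  simp only [trace, diag, pureProj, vecMulVec_apply, Complex.ofReal_sum]
  exact Finset.sum_congr rfl fun i _ => star_mul_self' _

lemma proj_smul {d : ℕ} (a : ℂ) (v : Fin d → ℂ) :
    pureProj (fun i => a * v i) = (a * star a) • pureProj v := by
  ext i j
  simp only [pureProj, vecMulVec_apply, Matrix.smul_apply, smul_eq_mul, star_mul']
  ring

lemma mem_nonneg {d : ℕ} {ρ : Matrix (Fin d) (Fin d) ℂ} {r : ℝ}
    (hr : r ∈ { r | ∃ (m : ℕ) (q : Fin m → ℝ) (ψ : Fin m → Fin d → ℂ),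
      IsDecomp ρ q ψ ∧ r = ∑ e, q e * pureR (ψ e) }) : 0 ≤ r := by
  obtain ⟨m, q, ψ, ⟨hq, _, hu, _⟩, rfl⟩ := hr
  exact Finset.sum_nonneg fun e _ => mul_nonneg (hq e) (pureR_nonneg (hu e))

lemma RI_nonneg {d : ℕ} (ρ : Matrix (Fin d) (Fin d) ℂ) : 0 ≤ RI ρ :=
  Real.sInf_nonneg (fun _ hr => mem_nonneg hr)

lemma RI_le {d : ℕ} {ρ : Matrix (Fin d) (Fin d) ℂ} {m : ℕ} {q : Fin m → ℝ}
    {ψ : Fin m → Fin d → ℂ} (h : IsDecomp ρ q ψ) :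
    RI ρ ≤ ∑ e, q e * pureR (ψ e) :=
  csInf_le ⟨0, fun _ hr => mem_nonneg hr⟩ ⟨m, q, ψ, h, rfl⟩

lemma Q_proj {d : ℕ} (x v : Fin d → ℂ) :
    ∑ i, ∑ j, star (v i) * (pureProj x i j * v j)
      = ((‖∑ i, star (x i) * v i‖ ^ 2 : ℝ) : ℂ) := by
  have h1 : ∑ i, ∑ j, star (v i) * (pureProj x i j * v j)
      = (∑ i, star (v i) * x i) * (∑ j, star (x j) * v j) := by
    rw [Finset.sum_mul_sum]
    exact Finset.sum_congr rfl fun i _ => Finset.sum_congr rfl fun j _ => by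
      simp only [pureProj, vecMulVec_apply]; ring
  have h2 : (∑ i, star (v i) * x i) = star (∑ j, star (x j) * v j) := by
    rw [star_sum]
    exact Finset.sum_congr rfl fun i _ => by simp [mul_comm]
  rw [h1, h2, mul_comm, star_mul_self']

lemma pure_decomp {d m : ℕ} {φ : Fin d → ℂ} (hφ : ∑ i, ‖φ i‖ ^ 2 = 1)
    {q : Fin m → ℝ} {ψ : Fin m → Fin d → ℂ} (h : IsDecomp (pureProj φ) q ψ) :
    ∑ e, q e * pureR (ψ e) = pureR φ := by
  obtain ⟨hq, hsq, hu, heq⟩ := h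
  have heq' : pureProj φ = ∑ e, (q e : ℂ) • pureProj (ψ e) := heq
  have key : ∀ e, q e ≠ 0 → ∀ i, ‖ψ e i‖ = ‖φ i‖ := by
    intro e0 he0
    set c : ℂ := ∑ i, star (φ i) * ψ e0 i with hc
    set v : Fin d → ℂ := fun i => ψ e0 i - c * φ i with hv
    have hnorm : (∑ i, φ i * star (φ i)) = 1 := by
      have : (∑ i, φ i * star (φ i)) = ((∑ i, ‖φ i‖ ^ 2 : ℝ) : ℂ) := by
        rw [Complex.ofReal_sum]
        exact Finset.sum_congr rfl fun i _ => star_mul_self' _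
      rw [this, hφ, Complex.ofReal_one]
    have hφv : ∑ i, star (φ i) * v i = 0 := by
      have expand : ∑ i, star (φ i) * v i
          = (∑ i, star (φ i) * ψ e0 i) - c * (∑ i, φ i * star (φ i)) := by
        rw [Finset.mul_sum, ← Finset.sum_sub_distrib]
        exact Finset.sum_congr rfl fun i _ => by simp only [hv]; ring
      rw [expand, hnorm, mul_one, ← hc, sub_self]
    -- linearity of the quadratic form
    have hQc : ∑ i, ∑ j, star (v i) * (pureProj φ i j * v j)
        = ∑ e, (q e : ℂ) * (∑ i, ∑ j, star (v i) * (pureProj (ψ e) i j * v j)) := by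
      calc ∑ i, ∑ j, star (v i) * (pureProj φ i j * v j)
          = ∑ i, ∑ j, ∑ e, (q e : ℂ) * (star (v i) * (pureProj (ψ e) i j * v j)) := by
            conv_lhs => rw [heq']
            refine Finset.sum_congr rfl fun i _ => Finset.sum_congr rfl fun j _ => ?_
            simp only [Matrix.sum_apply, Matrix.smul_apply, smul_eq_mul, Finset.mul_sum,
              Finset.sum_mul]
            exact Finset.sum_congr rfl fun e _ => by ring
        _ = ∑ i, ∑ e, ∑ j, (q e : ℂ) * (star (v i) * (pureProj (ψ e) i j * v j)) :=
            Finset.sum_congr rfl fun i _ => Finset.sum_comm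
        _ = ∑ e, ∑ i, ∑ j, (q e : ℂ) * (star (v i) * (pureProj (ψ e) i j * v j)) :=
            Finset.sum_comm
        _ = ∑ e, (q e : ℂ) * (∑ i, ∑ j, star (v i) * (pureProj (ψ e) i j * v j)) := by
            simp only [Finset.mul_sum]
    have hreal : (0 : ℝ) = ∑ e, q e * (‖∑ i, star (ψ e i) * v i‖ ^ 2) := by
      have := hQc
      rw [Q_proj, hφv] at this
      simp only [Q_proj] at this
      have h2 : ((0:ℝ) : ℂ) = ((∑ e, q e * (‖∑ i, star (ψ e i) * v i‖ ^ 2) : ℝ) : ℂ) := by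
        rw [Complex.ofReal_zero]
        rw [Complex.ofReal_sum]
        simpa [map_zero, Complex.ofReal_mul] using this
      exact_mod_cast h2
    have hterm : q e0 * (‖∑ i, star (ψ e0 i) * v i‖ ^ 2) = 0 := by
      have hall := (Finset.sum_eq_zero_iff_of_nonneg
        (fun e _ => mul_nonneg (hq e) (by positivity))).1 hreal.symm
      exact hall e0 (Finset.mem_univ e0)
    have hipz : ∑ i, star (ψ e0 i) * v i = 0 := by
      rcases mul_eq_zero.1 hterm with h' | h'
      · exact absurd h' he0
      · have : ‖∑ i, star (ψ e0 i) * v i‖ = 0 := by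
          have := sq_eq_zero_iff.1 h'
          exact this
        exact norm_eq_zero.1 this
    have hvz : ∀ i, v i = 0 := by
      have hsumv : ∑ i, star (v i) * v i = 0 := by
        have expand : ∑ i, star (v i) * v i
            = (∑ i, star (ψ e0 i) * v i) - star c * (∑ i, star (φ i) * v i) := by
          rw [Finset.mul_sum, ← Finset.sum_sub_distrib]
          exact Finset.sum_congr rfl fun i _ => by
            simp only [hv, star_sub, star_mul']; ring
        rw [expand, hipz, hφv, mul_zero, sub_zero]
      have hrv : (∑ i, (‖v i‖ ^ 2 : ℝ)) = 0 := by
        have : ((∑ i, (‖v i‖ ^ 2 : ℝ) : ℝ) : ℂ) = 0 := by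
          rw [Complex.ofReal_sum, ← hsumv]
          exact Finset.sum_congr rfl fun i _ => by rw [mul_comm, star_mul_self']
        exact_mod_cast this
      intro i
      have := (Finset.sum_eq_zero_iff_of_nonneg (fun i _ => by positivity)).1 hrv i
        (Finset.mem_univ i)
      have habs : ‖v i‖ = 0 := by
        have := sq_eq_zero_iff.1 this
        exact this
      exact norm_eq_zero.1 habs
    have hψc : ∀ i, ψ e0 i = c * φ i := by
      intro i
      have := hvz i
      simp only [hv, sub_eq_zero] at this
      exact this
    have habsc : ‖c‖ = 1 := by
      have h1 : ∑ i, ‖ψ e0 i‖ ^ 2 = ‖c‖ ^ 2 * ∑ i, ‖φ i‖ ^ 2 := by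
        rw [Finset.mul_sum]
        exact Finset.sum_congr rfl fun i _ => by rw [hψc i, norm_mul]; ring
      rw [hu e0, hφ, mul_one] at h1
      nlinarith [norm_nonneg c]
    intro i
    rw [hψc i, norm_mul, habsc, one_mul]
  have hRe : ∀ e, q e ≠ 0 → pureR (ψ e) = pureR φ := by
    intro e he
    simp only [pureR]
    congr 1
    exact Finset.sum_congr rfl fun i _ => by rw [key e he i]
  calc ∑ e, q e * pureR (ψ e) = ∑ e, q e * pureR φ := by
        refine Finset.sum_congr rfl fun e _ => ?_
        by_cases he : q e = 0
        · rw [he, zero_mul, zero_mul]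
        · rw [hRe e he]
    _ = pureR φ := by rw [← Finset.sum_mul, hsq, one_mul]

lemma RI_pure {d : ℕ} {φ : Fin d → ℂ} (hφ : ∑ i, ‖φ i‖ ^ 2 = 1) :
    RI (pureProj φ) = pureR φ := by
  have hdec : IsDecomp (pureProj φ) (fun _ : Fin 1 => (1 : ℝ)) (fun _ => φ) := by
    refine ⟨fun _ => zero_le_one, by simp, fun _ => hφ, ?_⟩
    simp [pureProj]
  apply le_antisymm
  · have := RI_le hdec
    simpa using this
  · refine le_csInf ⟨_, ⟨1, fun _ => 1, fun _ => φ, hdec, rfl⟩⟩ ?_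
    rintro r ⟨m, q, ψ, hd, rfl⟩
    rw [pure_decomp hφ hd]

/-- If the intrinsic randomness is monotone under a selective incoherent
operation `{K_n}` on pure states, then its convex-roof extension `R_I` is monotone under
the same selective operation on mixed states:
`R_I(ρ) ≥ Σ_n p_n R_I(ρ_n)` with `p_n = Tr[K_n ρ K_nᴴ]`, `ρ_n = K_n ρ K_nᴴ / p_n`. -/
theorem stmt9 (d k : ℕ) (K : Fin k → Matrix (Fin d) (Fin d) ℂ)
    (hkraus : ∑ n, (K n).conjTranspose * K n = 1)
    (hincoh : ∀ n, ∀ δ : Matrix (Fin d) (Fin d) ℂ, (∀ i j, i ≠ j → δ i j = 0) →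
      ∀ i j, i ≠ j → (K n * δ * (K n).conjTranspose) i j = 0)
    (hpure : ∀ ψ : Fin d → ℂ, (∑ i, ‖ψ i‖ ^ 2 = 1) →
      ∑ n, (K n * pureProj ψ * (K n).conjTranspose).trace.re *
          RI (((K n * pureProj ψ * (K n).conjTranspose).trace.re : ℂ)⁻¹ •
            (K n * pureProj ψ * (K n).conjTranspose)) ≤ pureR ψ)
    (ρ : Matrix (Fin d) (Fin d) ℂ)
    (hρ : ∃ (m : ℕ) (q : Fin m → ℝ) (ψ : Fin m → Fin d → ℂ), IsDecomp ρ q ψ) :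
    ∑ n, (K n * ρ * (K n).conjTranspose).trace.re *
        RI (((K n * ρ * (K n).conjTranspose).trace.re : ℂ)⁻¹ •
          (K n * ρ * (K n).conjTranspose)) ≤ RI ρ := by
  obtain ⟨m0, q0, ψ0, hd0⟩ := hρ
  have hm0 : 0 < m0 := by
    rcases Nat.eq_zero_or_pos m0 with h | h
    · subst h
      have := hd0.2.1
      simp at this
    · exact h
  have hd1 : 0 < d := by
    rcases Nat.eq_zero_or_pos d with h | h
    · subst h
      have := hd0.2.2.1 ⟨0, hm0⟩
      simp at this
    · exact h
  refine le_csInf ⟨_, ⟨m0, q0, ψ0, hd0, rfl⟩⟩ ?_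
  rintro r ⟨m, q, ψ, ⟨hq, hsq, hu, heq⟩, rfl⟩
  have heq' : ρ = ∑ e, (q e : ℂ) • pureProj (ψ e) := heq
  set p : Fin k → ℝ := fun n => (K n * ρ * (K n).conjTranspose).trace.re with hp
  set pe : Fin k → Fin m → ℝ :=
    fun n e => ∑ i, ‖(K n).mulVec (ψ e) i‖ ^ 2 with hpe
  have hpe0 : ∀ n e, 0 ≤ pe n e := fun n e => Finset.sum_nonneg fun i _ => by positivity
  have hA : ∀ n e, (K n * pureProj (ψ e) * (K n).conjTranspose).trace = ((pe n e : ℝ) : ℂ) := by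
    intro n e; rw [proj_conj, trace_proj]
  have hAre : ∀ n e, (K n * pureProj (ψ e) * (K n).conjTranspose).trace.re = pe n e := by
    intro n e; rw [hA]; exact Complex.ofReal_re _
  have hB : ∀ n, K n * ρ * (K n).conjTranspose
      = ∑ e, (q e : ℂ) • pureProj ((K n).mulVec (ψ e)) := by
    intro n
    rw [heq', Finset.mul_sum, Finset.sum_mul]
    exact Finset.sum_congr rfl fun e _ => by
      rw [mul_smul_comm, smul_mul_assoc, proj_conj]
  have hC : ∀ n, p n = ∑ e, q e * pe n e := by
    intro n
    have ht : (K n * ρ * (K n).conjTranspose).trace = ((∑ e, q e * pe n e : ℝ) : ℂ) := by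
      rw [hB n, trace_sum, Complex.ofReal_sum]
      exact Finset.sum_congr rfl fun e _ => by
        rw [trace_smul, trace_proj, smul_eq_mul, Complex.ofReal_mul]
    simp only [hp, ht, Complex.ofReal_re]
  have hpnn : ∀ n, 0 ≤ p n := fun n => by
    rw [hC]
    exact Finset.sum_nonneg fun e _ => mul_nonneg (hq e) (hpe0 n e)
  -- normalized post-measurement pure vectors
  set φ : Fin k → Fin m → Fin d → ℂ :=
    fun n e i => ((Real.sqrt (pe n e) : ℝ) : ℂ)⁻¹ * (K n).mulVec (ψ e) i with hφ
  have hKzero : ∀ n e, pe n e = 0 → ∀ i, (K n).mulVec (ψ e) i = 0 := by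
    intro n e h0 i
    have := (Finset.sum_eq_zero_iff_of_nonneg (fun i _ => by positivity)).1 h0 i
      (Finset.mem_univ i)
    have habs : ‖(K n).mulVec (ψ e) i‖ = 0 := sq_eq_zero_iff.1 this
    exact norm_eq_zero.1 habs
  have hE : ∀ n e, pe n e ≠ 0 → ∑ i, ‖φ n e i‖ ^ 2 = 1 := by
    intro n e h0
    have hpos : 0 < pe n e := lt_of_le_of_ne (hpe0 n e) (Ne.symm h0)
    have : ∀ i, ‖φ n e i‖ ^ 2 = (pe n e)⁻¹ * ‖(K n).mulVec (ψ e) i‖ ^ 2 := by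
      intro i
      simp only [hφ, norm_mul, norm_inv, Complex.norm_real, Real.norm_eq_abs,
        abs_of_nonneg (Real.sqrt_nonneg _)]
      rw [mul_pow, ← Real.sqrt_inv, Real.sq_sqrt (by positivity)]
    rw [Finset.sum_congr rfl fun i _ => this i, ← Finset.mul_sum]
    exact inv_mul_cancel₀ h0
  have hF : ∀ n e, pe n e ≠ 0 →
      ((pe n e : ℝ) : ℂ)⁻¹ • pureProj ((K n).mulVec (ψ e)) = pureProj (φ n e) := by
    intro n e h0
    have : pureProj (φ n e)
        = ((((Real.sqrt (pe n e) : ℝ) : ℂ))⁻¹ * star (((Real.sqrt (pe n e) : ℝ) : ℂ))⁻¹) •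
          pureProj ((K n).mulVec (ψ e)) := by
      rw [← proj_smul]
    rw [this]
    congr 1
    rw [star_inv₀, Complex.star_def, Complex.conj_ofReal, ← mul_inv, ← Complex.ofReal_mul,
      Real.mul_self_sqrt (hpe0 n e)]
  -- the pure-state monotonicity hypothesis, rewritten
  have hH : ∀ e, ∑ n, pe n e *
      RI (((K n * pureProj (ψ e) * (K n).conjTranspose).trace.re : ℂ)⁻¹ •
        (K n * pureProj (ψ e) * (K n).conjTranspose)) ≤ pureR (ψ e) := by
    intro e
    have := hpure (ψ e) (hu e)
    calc ∑ n, pe n e * RI (((K n * pureProj (ψ e) * (K n).conjTranspose).trace.re : ℂ)⁻¹ •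
          (K n * pureProj (ψ e) * (K n).conjTranspose))
        = ∑ n, (K n * pureProj (ψ e) * (K n).conjTranspose).trace.re *
          RI (((K n * pureProj (ψ e) * (K n).conjTranspose).trace.re : ℂ)⁻¹ •
            (K n * pureProj (ψ e) * (K n).conjTranspose)) := by
          exact Finset.sum_congr rfl fun n _ => by rw [hAre]
      _ ≤ pureR (ψ e) := this
  have hg : ∀ n e, pe n e ≠ 0 →
      RI (((K n * pureProj (ψ e) * (K n).conjTranspose).trace.re : ℂ)⁻¹ •
        (K n * pureProj (ψ e) * (K n).conjTranspose)) = pureR (φ n e) := by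
    intro n e h0
    rw [hAre, proj_conj, hF n e h0, RI_pure (hE n e h0)]
  -- Step 1: per-measurement-outcome bound
  have step1 : ∀ n, p n * RI (((p n : ℝ) : ℂ)⁻¹ • (K n * ρ * (K n).conjTranspose))
      ≤ ∑ e, q e * (pe n e *
        RI (((K n * pureProj (ψ e) * (K n).conjTranspose).trace.re : ℂ)⁻¹ •
          (K n * pureProj (ψ e) * (K n).conjTranspose))) := by
    intro n
    by_cases hpn : p n = 0
    · rw [hpn, zero_mul]
      exact Finset.sum_nonneg fun e _ => mul_nonneg (hq e)
        (mul_nonneg (hpe0 n e) (RI_nonneg _))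
    · have hppos : 0 < p n := lt_of_le_of_ne (hpnn n) (Ne.symm hpn)
      set w : Fin m → ℝ := fun e => q e * pe n e / p n with hw
      set χ : Fin m → Fin d → ℂ := fun e =>
        if pe n e = 0 then (fun i => if i = ⟨0, hd1⟩ then 1 else 0) else φ n e with hχ
      have hdecn : IsDecomp (((p n : ℝ) : ℂ)⁻¹ • (K n * ρ * (K n).conjTranspose)) w χ := by
        refine ⟨fun e => div_nonneg (mul_nonneg (hq e) (hpe0 n e)) (hpnn n), ?_, ?_, ?_⟩
        · rw [← Finset.sum_div, ← hC, div_self hpn]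
        · intro e
          by_cases h0 : pe n e = 0
          · simp only [hχ, h0, if_true]
            rw [Finset.sum_eq_single ⟨0, hd1⟩]
            · simp
            · intro i _ hi; simp [hi]
            · intro h; exact absurd (Finset.mem_univ _) h
          · simp only [hχ, h0, if_false]
            exact hE n e h0
        · rw [hB n, Finset.smul_sum]
          refine Finset.sum_congr rfl fun e _ => ?_
          show ((p n : ℝ) : ℂ)⁻¹ • ((q e : ℂ) • pureProj ((K n).mulVec (ψ e)))
            = (w e : ℂ) • pureProj (χ e)
          by_cases h0 : pe n e = 0
          · have hz : pureProj ((K n).mulVec (ψ e)) = 0 := by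
              ext i j
              simp [pureProj, vecMulVec_apply, hKzero n e h0]
            have hwz : w e = 0 := by rw [hw]; simp [h0]
            rw [hz, hwz]; simp
          · simp only [hχ, h0, if_false]
            rw [← hF n e h0, smul_smul, smul_smul]
            congr 1
            have hpC : ((p n : ℝ) : ℂ) ≠ 0 := Complex.ofReal_ne_zero.2 hpn
            have hpeC : ((pe n e : ℝ) : ℂ) ≠ 0 := Complex.ofReal_ne_zero.2 h0
            rw [hw]
            push_cast
            field_simp
      have h1 := RI_le hdecn
      have h2 : p n * RI (((p n : ℝ) : ℂ)⁻¹ • (K n * ρ * (K n).conjTranspose))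
          ≤ p n * ∑ e, w e * pureR (χ e) :=
        mul_le_mul_of_nonneg_left h1 (hpnn n)
      refine h2.trans (le_of_eq ?_)
      rw [Finset.mul_sum]
      refine Finset.sum_congr rfl fun e _ => ?_
      by_cases h0 : pe n e = 0
      · have hwz : w e = 0 := by rw [hw]; simp [h0]
        rw [hwz, h0]; ring
      · simp only [hχ, h0, if_false]
        rw [hg n e h0, hw]
        field_simp
  -- Step 2: sum over n and use the hypothesis
  calc ∑ n, p n * RI (((p n : ℝ) : ℂ)⁻¹ • (K n * ρ * (K n).conjTranspose))
      ≤ ∑ n, ∑ e, q e * (pe n e *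
        RI (((K n * pureProj (ψ e) * (K n).conjTranspose).trace.re : ℂ)⁻¹ •
          (K n * pureProj (ψ e) * (K n).conjTranspose))) :=
        Finset.sum_le_sum fun n _ => step1 n
    _ = ∑ e, q e * ∑ n, pe n e *
        RI (((K n * pureProj (ψ e) * (K n).conjTranspose).trace.re : ℂ)⁻¹ •
          (K n * pureProj (ψ e) * (K n).conjTranspose)) := by
        rw [Finset.sum_comm]
        exact Finset.sum_congr rfl fun e _ => by rw [Finset.mul_sum]
    _ ≤ ∑ e, q e * pureR (ψ e) :=
        Finset.sum_le_sum fun e _ => mul_le_mul_of_nonneg_left (hH e) (hq e)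
end

section
/- Conditioned on the Hamming-weight-k outcome, the post-measurement state of |ψ⟩^{⊗N} is the maximally coherent state of dimension C(N,k): P_k |ψ⟩^{⊗N} / ‖P_k |ψ⟩^{⊗N}‖ = (1/√C(N,k)) Σ_{x: wt(x)=k} e^{iθ_k} |x⟩, i.e., all its nonzero amplitudes in the computational basis have equal modulus 1/√C(N,k). -/
open Finset

/-- Hamming weight of a bit string `x : Fin N → Fin 2`. -/
def hamWt {N : ℕ} (x : Fin N → Fin 2) : ℕ :=
  (Finset.univ.filter (fun j => x j = 1)).card

/-- Amplitude of `|ψ⟩^{⊗N}` (with `|ψ⟩ = α|0⟩+β|1⟩`) on the basis string `x`. -/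
noncomputable def amp {N : ℕ} (α β : ℂ) (x : Fin N → Fin 2) : ℂ :=
  ∏ j, (if x j = 0 then α else β)

lemma abs_amp {N : ℕ} (α β : ℂ) (x : Fin N → Fin 2) :
    ‖amp α β x‖ =
      ‖α‖ ^ (N - hamWt x) * ‖β‖ ^ (hamWt x) := by
  have hne : ∀ j, (¬ x j = 0) ↔ x j = 1 := by
    intro j; omega
  have hcard : (Finset.univ.filter (fun j => x j = 0)).card = N - hamWt x := by
    have := Finset.card_filter_add_card_filter_not
      (s := (Finset.univ : Finset (Fin N))) (p := fun j => x j = 0)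
    simp only [Finset.card_univ, Fintype.card_fin] at this
    have h2 : (Finset.univ.filter (fun j => ¬ x j = 0)).card = hamWt x := by
      unfold hamWt
      congr 1
      apply Finset.filter_congr
      intro j _
      simp [hne j]
    omega
  rw [amp, norm_prod]
  simp only [apply_ite (norm : ℂ → ℝ)]
  rw [Finset.prod_ite]
  simp only [Finset.prod_const]
  rw [hcard]
  congr 1
  congr 1
  unfold hamWt
  congr 1
  apply Finset.filter_congr
  intro j _
  simp [hne j]

lemma card_wt (N k : ℕ) :
    (Finset.univ.filter (fun y : Fin N → Fin 2 => hamWt y = k)).card = N.choose k := by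
  have := Finset.card_powersetCard k (Finset.univ : Finset (Fin N))
  rw [Finset.card_univ, Fintype.card_fin] at this
  rw [← this]
  apply Finset.card_bij (fun y _ => Finset.univ.filter (fun j => y j = 1))
  · intro y hy
    rw [Finset.mem_powersetCard]
    exact ⟨Finset.filter_subset _ _, (Finset.mem_filter.mp hy).2⟩
  · intro y1 h1 y2 h2 he
    funext j
    have : j ∈ Finset.univ.filter (fun j => y1 j = 1) ↔
        j ∈ Finset.univ.filter (fun j => y2 j = 1) := by rw [he]
    simp only [Finset.mem_filter, Finset.mem_univ, true_and] at this
    omega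
  · intro s hs
    rw [Finset.mem_powersetCard] at hs
    refine ⟨fun j => if j ∈ s then 1 else 0, ?_, ?_⟩
    · rw [Finset.mem_filter]
      refine ⟨Finset.mem_univ _, ?_⟩
      unfold hamWt
      rw [← hs.2]
      congr 1
      ext j
      simp
    · ext j
      simp

/-- Conditioned on the Hamming-weight-`k` outcome, the post-measurement state
of `|ψ⟩^{⊗N}` is maximally coherent of dimension `C(N,k)`: every nonzero amplitude of the
normalized state `P_k|ψ⟩^{⊗N}/‖P_k|ψ⟩^{⊗N}‖` has modulus `1/√C(N,k)`. -/
theorem stmt11 (N k : ℕ) (hk : k ≤ N) (α β : ℂ) (hα : α ≠ 0) (hβ : β ≠ 0)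
    (h : ‖α‖ ^ 2 + ‖β‖ ^ 2 = 1) :
    ∀ x : Fin N → Fin 2, hamWt x = k →
      ‖amp α β x‖ /
          Real.sqrt (∑ y ∈ Finset.univ.filter (fun y : Fin N → Fin 2 => hamWt y = k),
            ‖amp α β y‖ ^ 2) =
        1 / Real.sqrt (N.choose k) := by
  intro x hx
  set c : ℝ := ‖α‖ ^ (N - k) * ‖β‖ ^ k with hc
  have hcpos : 0 < c := by
    exact mul_pos (pow_pos (norm_pos_iff.mpr hα) _) (pow_pos (norm_pos_iff.mpr hβ) _)
  have hax : ∀ y : Fin N → Fin 2, hamWt y = k → ‖amp α β y‖ = c := by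
    intro y hy
    rw [abs_amp, hy]
  have hsum : (∑ y ∈ Finset.univ.filter (fun y : Fin N → Fin 2 => hamWt y = k),
      ‖amp α β y‖ ^ 2) = (N.choose k : ℝ) * c ^ 2 := by
    rw [Finset.sum_congr rfl (fun y hy => by
      rw [hax y (Finset.mem_filter.mp hy).2]), Finset.sum_const, card_wt]
    simp [nsmul_eq_mul]
  rw [hax x hx, hsum]
  rw [Real.sqrt_mul (by positivity), Real.sqrt_sq hcpos.le]
  have hch : (0:ℝ) < N.choose k := by exact_mod_cast Nat.choose_pos hk
  rw [div_eq_div_iff (by positivity) (ne_of_gt (Real.sqrt_pos.mpr hch))]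
  ring
end

section
/- Uniqueness of the regularized coherence measure on pure states: suppose C is a coherence monotone with C(|Ψ_d⟩) = log₂ d, monotone under incoherent operations, and the regularization C^∞(ρ) = lim_N C(ρ^{⊗N})/N exists. If for a pure state ρ both exact asymptotic distillation at rate R and formation at rate R are possible by incoherent operations (R = S(ρ^diag)), then C^∞(ρ) = R. -/
open Filter

/-- Uniqueness of the regularized coherence measure on pure states. If `C` is
monotone under incoherent operations (modeled by a convertibility relation `conv`), satisfies
`C(Ψ₂^{⊗m}) = m` (i.e. `C(|Ψ_d⟩) = log₂ d` on maximally coherent states), its regularization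
`C^∞(ρ) = lim_N C(ρ^{⊗N})/N` exists, and a pure state `ρ` is exactly asymptotically
interconvertible with maximally coherent qubits at rate `R` (distillation
`ρ^{⊗N} → Ψ₂^{⊗⌊NR⌋}` and formation `Ψ₂^{⊗⌈NR⌉} → ρ^{⊗N}` for all large `N`), then
`C^∞(ρ) = R`. -/
theorem stmt16 {State : Type*} (conv : State → State → Prop)
    (C : State → ℝ)
    (hmono : ∀ a b, conv a b → C b ≤ C a)
    (ρ Ψ : State)
    (powρ powΨ : ℕ → State)
    (hΨnorm : ∀ m, C (powΨ m) = (m : ℝ))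
    (R : ℝ) (hR : 0 ≤ R)
    (Cinf : ℝ)
    (hlim : Tendsto (fun N : ℕ => C (powρ N) / N) atTop (nhds Cinf))
    (hdistill : ∃ N₀ : ℕ, ∀ N ≥ N₀, conv (powρ N) (powΨ ⌊R * (N:ℝ)⌋₊))
    (hform : ∃ N₀ : ℕ, ∀ N ≥ N₀, conv (powΨ ⌈R * (N:ℝ)⌉₊) (powρ N)) :
    Cinf = R := by
  obtain ⟨N₁, hd⟩ := hdistill
  obtain ⟨N₂, hf⟩ := hform
  have hlow : Tendsto (fun N : ℕ => (R * N - 1) / N) atTop (nhds R) := by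
    have h1 : Tendsto (fun N : ℕ => R - 1 / N) atTop (nhds (R - 0)) :=
      tendsto_const_nhds.sub (tendsto_one_div_atTop_nhds_zero_nat)
    rw [sub_zero] at h1
    refine h1.congr' ?_
    filter_upwards [eventually_gt_atTop 0] with N hN
    have : (N : ℝ) ≠ 0 := Nat.cast_ne_zero.mpr hN.ne'
    field_simp
  have hhigh : Tendsto (fun N : ℕ => (R * N + 1) / N) atTop (nhds R) := by
    have h1 : Tendsto (fun N : ℕ => R + 1 / N) atTop (nhds (R + 0)) :=
      tendsto_const_nhds.add (tendsto_one_div_atTop_nhds_zero_nat)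
    rw [add_zero] at h1
    refine h1.congr' ?_
    filter_upwards [eventually_gt_atTop 0] with N hN
    have : (N : ℝ) ≠ 0 := Nat.cast_ne_zero.mpr hN.ne'
    field_simp
  have hsq : Tendsto (fun N : ℕ => C (powρ N) / N) atTop (nhds R) := by
    apply tendsto_of_tendsto_of_tendsto_of_le_of_le' hlow hhigh
    · filter_upwards [eventually_ge_atTop N₁, eventually_gt_atTop 0] with N hN hN0
      have hc : (⌊R * (N:ℝ)⌋₊ : ℝ) ≤ C (powρ N) := by
        have := hmono _ _ (hd N hN)
        rwa [hΨnorm] at this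
      have hfl : R * N - 1 ≤ (⌊R * (N:ℝ)⌋₊ : ℝ) := by
        have := Nat.sub_one_lt_floor (R * N)
        linarith
      have hNpos : (0:ℝ) < N := Nat.cast_pos.mpr hN0
      exact div_le_div_of_nonneg_right (le_trans hfl hc) hNpos.le
    · filter_upwards [eventually_ge_atTop N₂, eventually_gt_atTop 0] with N hN hN0
      have hc : C (powρ N) ≤ (⌈R * (N:ℝ)⌉₊ : ℝ) := by
        have := hmono _ _ (hf N hN)
        rwa [hΨnorm] at this
      have hcl : (⌈R * (N:ℝ)⌉₊ : ℝ) ≤ R * N + 1 := by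
        have h0 : 0 ≤ R * (N:ℝ) := mul_nonneg hR (Nat.cast_nonneg N)
        have := Nat.ceil_lt_add_one h0
        linarith
      have hNpos : (0:ℝ) < N := Nat.cast_pos.mpr hN0
      exact div_le_div_of_nonneg_right (le_trans hc hcl) hNpos.le
  exact tendsto_nhds_unique hlim hsq
end
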